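/- Herzberg's upper bound satisfies ln S_U(n) = 2n⁴ ln n − 2.5 n⁴ + O(n³ ln n) as n → ∞. -/

import Mathlib

open Finset

/-- Herzberg's upper bound `S_U(n)` (indices shifted down by one). -/
noncomputable def SU (n : ℕ) : ℝ :=
  ∏ i ∈ range n,
    (∏ j ∈ range (i + 1),
      ((n ^ 2 - i * n - j).factorial : ℝ) ^
        ((n ^ 2 : ℝ) / ((n : ℝ) ^ 2 - i * n - j))) *
    (∏ j ∈ Ico (i + 1) n,
      ((n ^ 2 - j * n).factorial : ℝ) ^
        ((n ^ 2 : ℝ) / ((n : ℝ) ^ 2 - j * n)))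


section SUProofAux

lemma one_sub_inv_le_log {x : ℝ} (hx : 0 < x) : 1 - 1/x ≤ Real.log x := by
  have h := Real.log_le_sub_one_of_pos (inv_pos.2 hx)
  rw [Real.log_inv] at h
  have : (1:ℝ)/x = x⁻¹ := one_div x
  linarith

lemma logfac_lower (m : ℕ) : (m:ℝ) * Real.log m - m ≤ Real.log (Nat.factorial m) := by
  induction m with
  | zero => simp
  | succ m ih =>
    rcases Nat.eq_zero_or_pos m with hm | hm
    · subst hm; simp
    have hm' : (0:ℝ) < m := by exact_mod_cast hm
    have hfac : (Nat.factorial (m+1) : ℝ) = (m+1) * Nat.factorial m := by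
      push_cast [Nat.factorial_succ]; ring
    have hfp : (0:ℝ) < Nat.factorial m := by positivity
    have hlog : Real.log (Nat.factorial (m+1)) = Real.log ((m:ℝ)+1) + Real.log (Nat.factorial m) := by
      rw [hfac, Real.log_mul (by positivity) (ne_of_gt hfp)]
    -- need: (m+1) log(m+1) - (m+1) ≤ log(m+1) + (m log m - m)
    -- i.e. m*(log(m+1) - log m) ≤ 1
    have hq : Real.log ((m:ℝ)+1) - Real.log m ≤ 1/m := by
      rw [← Real.log_div (by positivity) (ne_of_gt hm')]
      have := Real.log_le_sub_one_of_pos (show (0:ℝ) < ((m:ℝ)+1)/m by positivity)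
      have hx : ((m:ℝ)+1)/m - 1 = 1/m := by field_simp; ring
      linarith
    have : (m:ℝ) * (Real.log ((m:ℝ)+1) - Real.log m) ≤ 1 := by
      calc (m:ℝ) * (Real.log ((m:ℝ)+1) - Real.log m) ≤ (m:ℝ) * (1/m) := by
            apply mul_le_mul_of_nonneg_left hq (le_of_lt hm')
        _ = 1 := by field_simp
    push_cast
    rw [hlog]
    push_cast at ih ⊢
    nlinarith [ih]

lemma logfac_upper (m : ℕ) : Real.log (Nat.factorial m) ≤ (m:ℝ) * Real.log m - m + Real.log m + 1 := by
  induction m with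
  | zero => simp
  | succ m ih =>
    rcases Nat.eq_zero_or_pos m with hm | hm
    · subst hm; simp
    have hm' : (0:ℝ) < m := by exact_mod_cast hm
    have hfp : (0:ℝ) < Nat.factorial m := by positivity
    have hfac : (Nat.factorial (m+1) : ℝ) = (m+1) * Nat.factorial m := by
      push_cast [Nat.factorial_succ]; ring
    have hlog : Real.log (Nat.factorial (m+1)) = Real.log ((m:ℝ)+1) + Real.log (Nat.factorial m) := by
      rw [hfac, Real.log_mul (by positivity) (ne_of_gt hfp)]
    -- need: log(m+1)! ≤ (m+1)log(m+1) - (m+1) + log(m+1) + 1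
    -- have: log m! ≤ m log m - m + log m + 1
    -- suffices: (m+1) log m + 1 ≤ (m+1) log(m+1), i.e. 1/(m+1) ≤ log((m+1)/m)
    have hq : 1/((m:ℝ)+1) ≤ Real.log ((m:ℝ)+1) - Real.log m := by
      rw [← Real.log_div (by positivity) (ne_of_gt hm')]
      have := one_sub_inv_le_log (show (0:ℝ) < ((m:ℝ)+1)/m by positivity)
      have hx : 1 - 1/(((m:ℝ)+1)/m) = 1/(m+1) := by
        rw [one_div_div]; field_simp; ring
      linarith
    have key : 1 ≤ ((m:ℝ)+1) * (Real.log ((m:ℝ)+1) - Real.log m) := by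
      calc (1:ℝ) = ((m:ℝ)+1) * (1/((m:ℝ)+1)) := by field_simp
        _ ≤ _ := by apply mul_le_mul_of_nonneg_left hq (by positivity)
    push_cast
    rw [hlog]
    push_cast at ih ⊢
    nlinarith [ih]

lemma harmonic_le (n : ℕ) : ∑ j ∈ range n, (1:ℝ)/(j+1) ≤ Real.log n + 1 := by
  induction n with
  | zero => simp
  | succ n ih =>
    rcases Nat.eq_zero_or_pos n with hn | hn
    · subst hn; simp
    have hn' : (0:ℝ) < n := by exact_mod_cast hn
    rw [Finset.sum_range_succ]
    have hq : 1/((n:ℝ)+1) ≤ Real.log ((n:ℝ)+1) - Real.log n := by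
      rw [← Real.log_div (by positivity) (ne_of_gt hn')]
      have := one_sub_inv_le_log (show (0:ℝ) < ((n:ℝ)+1)/n by positivity)
      have hx : 1 - 1/(((n:ℝ)+1)/n) = 1/(n+1) := by
        rw [one_div_div]; field_simp; ring
      linarith
    push_cast
    push_cast at ih
    linarith

noncomputable def G (n : ℕ) : ℝ := ∑ k ∈ range n, ((k:ℝ)+1) * Real.log ((k:ℝ)+1)

lemma log_succ_sub_log_le (n : ℕ) (hn : 0 < n) :
    (n:ℝ) * (Real.log ((n:ℝ)+1) - Real.log n) ≤ 1 := by
  have hn' : (0:ℝ) < n := by exact_mod_cast hn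
  have hq : Real.log ((n:ℝ)+1) - Real.log n ≤ 1/n := by
    rw [← Real.log_div (by positivity) (ne_of_gt hn')]
    have := Real.log_le_sub_one_of_pos (show (0:ℝ) < ((n:ℝ)+1)/n by positivity)
    have hx : ((n:ℝ)+1)/n - 1 = 1/n := by field_simp; ring
    linarith
  calc (n:ℝ) * (Real.log ((n:ℝ)+1) - Real.log n) ≤ (n:ℝ) * (1/n) :=
        mul_le_mul_of_nonneg_left hq (le_of_lt hn')
    _ = 1 := by field_simp

lemma one_le_succ_mul_log (n : ℕ) (hn : 0 < n) :
    1 ≤ ((n:ℝ)+1) * (Real.log ((n:ℝ)+1) - Real.log n) := by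
  have hn' : (0:ℝ) < n := by exact_mod_cast hn
  have hq : 1/((n:ℝ)+1) ≤ Real.log ((n:ℝ)+1) - Real.log n := by
    rw [← Real.log_div (by positivity) (ne_of_gt hn')]
    have := one_sub_inv_le_log (show (0:ℝ) < ((n:ℝ)+1)/n by positivity)
    have hx : 1 - 1/(((n:ℝ)+1)/n) = 1/(n+1) := by rw [one_div_div]; field_simp; ring
    linarith
  calc (1:ℝ) = ((n:ℝ)+1) * (1/((n:ℝ)+1)) := by field_simp
    _ ≤ _ := mul_le_mul_of_nonneg_left hq (by positivity)

lemma G_lower (n : ℕ) : (n:ℝ)^2/2 * Real.log n - (n:ℝ)^2/4 ≤ G n := by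
  induction n with
  | zero => simp [G]
  | succ n ih =>
    rcases Nat.eq_zero_or_pos n with hn | hn
    · subst hn; norm_num [G, Finset.sum_range_succ]
    have hn' : (1:ℝ) ≤ n := by exact_mod_cast hn
    have h1 := log_succ_sub_log_le n hn
    have hx0 : 0 ≤ Real.log n := Real.log_natCast_nonneg n
    have hy0 : 0 ≤ Real.log ((n:ℝ)+1) := by
      have : Real.log n ≤ Real.log ((n:ℝ)+1) :=
        Real.log_le_log (by positivity) (by linarith)
      linarith
    have hG : G (n+1) = G n + ((n:ℝ)+1) * Real.log ((n:ℝ)+1) := by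
      rw [G, Finset.sum_range_succ]; rfl
    rw [hG]
    push_cast
    set x := Real.log (n:ℝ)
    set y := Real.log ((n:ℝ)+1)
    have h1' : (n:ℝ)/2 * ((n:ℝ)*(y - x)) ≤ (n:ℝ)/2 * 1 :=
      mul_le_mul_of_nonneg_left h1 (by positivity)
    nlinarith [ih]

lemma G_upper (n : ℕ) : G n ≤ (n:ℝ)^2/2 * Real.log n - (n:ℝ)^2/4 + n * Real.log n + n := by
  induction n with
  | zero => simp [G]
  | succ n ih =>
    rcases Nat.eq_zero_or_pos n with hn | hn
    · subst hn; norm_num [G, Finset.sum_range_succ]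
    have hn' : (1:ℝ) ≤ n := by exact_mod_cast hn
    have h2 := one_le_succ_mul_log n hn
    have hx0 : 0 ≤ Real.log n := Real.log_natCast_nonneg n
    have hyx : Real.log n ≤ Real.log ((n:ℝ)+1) :=
      Real.log_le_log (by positivity) (by linarith)
    have hG : G (n+1) = G n + ((n:ℝ)+1) * Real.log ((n:ℝ)+1) := by
      rw [G, Finset.sum_range_succ]; rfl
    rw [hG]
    push_cast
    set x := Real.log (n:ℝ)
    set y := Real.log ((n:ℝ)+1)
    have h2' : (n:ℝ)/2 * 1 ≤ (n:ℝ)/2 * (((n:ℝ)+1)*(y - x)) :=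
      mul_le_mul_of_nonneg_left h2 (by positivity)
    nlinarith [ih, mul_nonneg (show (0:ℝ) ≤ (n:ℝ)/2 by positivity) (show (0:ℝ) ≤ y - x by linarith)]

lemma sum_log_range (n : ℕ) :
    ∑ i ∈ range n, Real.log ((i:ℝ)+1) = Real.log (Nat.factorial n) := by
  induction n with
  | zero => simp
  | succ n ih =>
    rw [Finset.sum_range_succ, ih]
    have hfp : (0:ℝ) < Nat.factorial n := by positivity
    have hfac : (Nat.factorial (n+1) : ℝ) = ((n:ℝ)+1) * Nat.factorial n := by
      push_cast [Nat.factorial_succ]; ring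
    rw [hfac, Real.log_mul (by positivity) (ne_of_gt hfp)]
    ring

lemma sum_logfac (n : ℕ) :
    ∑ r ∈ range n, Real.log (Nat.factorial r) = (n:ℝ) * Real.log (Nat.factorial n) - G n := by
  induction n with
  | zero => simp [G]
  | succ n ih =>
    rw [Finset.sum_range_succ, ih]
    have hfp : (0:ℝ) < Nat.factorial n := by positivity
    have hfac : (Nat.factorial (n+1) : ℝ) = ((n:ℝ)+1) * Nat.factorial n := by
      push_cast [Nat.factorial_succ]; ring
    have hG : G (n+1) = G n + ((n:ℝ)+1) * Real.log ((n:ℝ)+1) := by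
      rw [G, Finset.sum_range_succ]; rfl
    rw [hG, hfac, Real.log_mul (by positivity) (ne_of_gt hfp)]
    push_cast
    ring

lemma sum_weighted (n : ℕ) :
    ∑ i ∈ range n, ((i:ℝ)+1) * Real.log ((n - i : ℕ)) =
      ((n:ℝ)+1) * Real.log (Nat.factorial n) - G n := by
  have hrefl := Finset.sum_range_reflect (fun i => ((i:ℝ)+1) * Real.log ((n - i : ℕ))) n
  rw [← hrefl]
  have hcong : ∀ j ∈ range n,
      (((n - 1 - j : ℕ):ℝ)+1) * Real.log ((n - (n - 1 - j) : ℕ)) =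
      ((n:ℝ) - j) * Real.log ((j:ℝ)+1) := by
    intro j hj
    have hj' : j < n := Finset.mem_range.mp hj
    have e1 : ((n - 1 - j : ℕ):ℝ) = (n:ℝ) - 1 - j := by
      have : n - 1 - j = n - (1 + j) := by omega
      rw [this, Nat.cast_sub (by omega)]; push_cast; ring
    have e2 : (n - (n - 1 - j) : ℕ) = j + 1 := by omega
    rw [e1, e2]
    push_cast
    ring_nf
  rw [Finset.sum_congr rfl hcong]
  have expand : ∀ j ∈ range n, ((n:ℝ) - j) * Real.log ((j:ℝ)+1) =
      ((n:ℝ)+1) * Real.log ((j:ℝ)+1) - ((j:ℝ)+1) * Real.log ((j:ℝ)+1) := by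
    intro j _; ring
  rw [Finset.sum_congr rfl expand, Finset.sum_sub_distrib, ← Finset.mul_sum, sum_log_range]
  rfl

lemma cast1 {n i j : ℕ} (hi : i < n) (hj : j ≤ i) :
    ((n^2 - i*n - j : ℕ):ℝ) = (n:ℝ)^2 - i*n - j := by
  have h : i*n + j < n^2 := by
    calc i*n + j < i*n + n := by omega
      _ = (i+1)*n := by ring
      _ ≤ n*n := Nat.mul_le_mul_right n (by omega)
      _ = n^2 := (sq n).symm
  have h2 : n^2 - i*n - j = n^2 - (i*n + j) := by omega
  rw [h2, Nat.cast_sub (le_of_lt h)]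
  push_cast; ring

lemma cast2 {n j : ℕ} (hj : j < n) :
    ((n^2 - j*n : ℕ):ℝ) = (n:ℝ)^2 - j*n := by
  have h : j*n ≤ n^2 := by
    calc j*n ≤ n*n := Nat.mul_le_mul_right n (le_of_lt hj)
      _ = n^2 := (sq n).symm
  rw [Nat.cast_sub h]; push_cast; ring

lemma m1_pos {n i j : ℕ} (hi : i < n) (hj : j ≤ i) : 1 ≤ n^2 - i*n - j := by
  have h : i*n + j + 1 ≤ n^2 := by
    calc i*n + j + 1 ≤ i*n + n := by omega
      _ = (i+1)*n := by ring
      _ ≤ n*n := Nat.mul_le_mul_right n (by omega)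
      _ = n^2 := (sq n).symm
  omega

lemma m2_ge {n j : ℕ} (hj : j < n) : n ≤ n^2 - j*n := by
  have h : j*n + n ≤ n^2 := by
    calc j*n + n = (j+1)*n := by ring
      _ ≤ n*n := Nat.mul_le_mul_right n (by omega)
      _ = n^2 := (sq n).symm
  omega

lemma log_SU (n : ℕ) :
    Real.log (SU n) = ∑ i ∈ range n,
      ((∑ j ∈ range (i+1), ((n:ℝ)^2 / ((n^2 - i*n - j : ℕ):ℝ)) *
          Real.log (Nat.factorial (n^2 - i*n - j)))
      + ∑ j ∈ Ico (i+1) n, ((n:ℝ)^2 / ((n^2 - j*n : ℕ):ℝ)) *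
          Real.log (Nat.factorial (n^2 - j*n))) := by
  have fp : ∀ m : ℕ, (0:ℝ) < (Nat.factorial m : ℝ) := fun m => by positivity
  rw [SU, Real.log_prod]
  · apply Finset.sum_congr rfl
    intro i hi
    have hi' : i < n := Finset.mem_range.mp hi
    rw [Real.log_mul, Real.log_prod, Real.log_prod]
    · congr 1
      · apply Finset.sum_congr rfl
        intro j hj
        have hj' : j ≤ i := by have := Finset.mem_range.mp hj; omega
        rw [Real.log_rpow (fp _), cast1 hi' hj']
      · apply Finset.sum_congr rfl
        intro j hj
        have hj' : j < n := (Finset.mem_Ico.mp hj).2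
        rw [Real.log_rpow (fp _), cast2 hj']
    · intro j hj
      exact ne_of_gt (Real.rpow_pos_of_pos (fp _) _)
    · intro j hj
      exact ne_of_gt (Real.rpow_pos_of_pos (fp _) _)
    · exact ne_of_gt (Finset.prod_pos (fun j _ => Real.rpow_pos_of_pos (fp _) _))
    · exact ne_of_gt (Finset.prod_pos (fun j _ => Real.rpow_pos_of_pos (fp _) _))
  · intro i hi
    exact ne_of_gt (mul_pos (Finset.prod_pos (fun j _ => Real.rpow_pos_of_pos (fp _) _))
      (Finset.prod_pos (fun j _ => Real.rpow_pos_of_pos (fp _) _)))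

lemma inv_harm (d : ℕ) : ∑ i ∈ range d, 1/((d:ℝ) - i) ≤ Real.log d + 1 := by
  rw [← Finset.sum_range_reflect]
  have hc : ∀ k ∈ range d, 1/((d:ℝ) - ((d - 1 - k : ℕ):ℝ)) = 1/((k:ℝ)+1) := by
    intro k hk
    have hk' : k < d := Finset.mem_range.mp hk
    have e : ((d - 1 - k : ℕ):ℝ) = (d:ℝ) - 1 - k := by
      have h : d - 1 - k = d - (1 + k) := by omega
      rw [h, Nat.cast_sub (by omega)]; push_cast; ring
    rw [e]; ring_nf
  rw [Finset.sum_congr rfl hc]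
  exact harmonic_le d

lemma S_bound (n : ℕ) (hn : 2 ≤ n) :
    ∑ i ∈ range n, ∑ j ∈ range (i+1), 1/(((n^2 - i*n - j : ℕ)):ℝ) ≤
      2*Real.log n + 2 := by
  obtain ⟨m, rfl⟩ : ∃ m, n = m + 1 := ⟨n - 1, by omega⟩
  have hm : 1 ≤ m := by omega
  rw [Finset.sum_range_succ]
  have hlast : ∑ j ∈ range (m+1), 1/((((m+1)^2 - m*(m+1) - j : ℕ)):ℝ) ≤
      Real.log (m+1 : ℕ) + 1 := by
    have hc : ∀ j ∈ range (m+1),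
        1/((((m+1)^2 - m*(m+1) - j : ℕ)):ℝ) = 1/((((m+1:ℕ)):ℝ) - j) := by
      intro j hj
      have hj' : j < m + 1 := Finset.mem_range.mp hj
      have hsq : (m+1)^2 = m*(m+1) + (m+1) := by ring
      have key : (m+1)^2 - m*(m+1) - j = m + 1 - j := by omega
      rw [key, Nat.cast_sub (by omega)]
    rw [Finset.sum_congr rfl hc]
    exact inv_harm (m+1)
  have hrest : ∑ i ∈ range m, ∑ j ∈ range (i+1), 1/((((m+1)^2 - i*(m+1) - j : ℕ)):ℝ) ≤
      Real.log (m+1:ℕ) + 1 := by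
    have step : ∀ i ∈ range m,
        ∑ j ∈ range (i+1), 1/((((m+1)^2 - i*(m+1) - j : ℕ)):ℝ) ≤ 1/((m:ℝ) - i) := by
      intro i hi
      have hi' : i < m := Finset.mem_range.mp hi
      have hiR : (i:ℝ) < (m:ℝ) := by exact_mod_cast hi'
      have hpos : (0:ℝ) < ((m:ℝ)+1) * ((m:ℝ) - i) := by
        apply mul_pos (by positivity); linarith
      have hterm : ∀ j ∈ range (i+1),
          1/((((m+1)^2 - i*(m+1) - j : ℕ)):ℝ) ≤ 1/(((m:ℝ)+1)*((m:ℝ) - i)) := by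
        intro j hj
        have hj' : j ≤ i := by have := Finset.mem_range.mp hj; omega
        have hjR : (j:ℝ) ≤ (i:ℝ) := by exact_mod_cast hj'
        rw [cast1 (show i < m+1 by omega) hj']
        apply one_div_le_one_div_of_le hpos
        push_cast
        nlinarith
      calc ∑ j ∈ range (i+1), 1/((((m+1)^2 - i*(m+1) - j : ℕ)):ℝ)
          ≤ ∑ _j ∈ range (i+1), 1/(((m:ℝ)+1)*((m:ℝ) - i)) := Finset.sum_le_sum hterm
        _ = ((i:ℝ)+1) * (1/(((m:ℝ)+1)*((m:ℝ) - i))) := by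
            rw [Finset.sum_const, Finset.card_range]; push_cast; ring
        _ ≤ ((m:ℝ)+1) * (1/(((m:ℝ)+1)*((m:ℝ) - i))) := by
            apply mul_le_mul_of_nonneg_right _ (by positivity)
            linarith
        _ = 1/((m:ℝ) - i) := by
            rw [eq_div_iff (by linarith)]; field_simp; exact div_self (sub_ne_zero.mpr (ne_of_gt hiR))
    calc ∑ i ∈ range m, ∑ j ∈ range (i+1), 1/((((m+1)^2 - i*(m+1) - j : ℕ)):ℝ)
        ≤ ∑ i ∈ range m, 1/((m:ℝ) - i) := Finset.sum_le_sum step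
      _ ≤ Real.log m + 1 := inv_harm m
      _ ≤ Real.log (m+1:ℕ) + 1 := by
          have h1 : (0:ℝ) < (m:ℝ) := by exact_mod_cast hm
          have := Real.log_le_log h1 (show (m:ℝ) ≤ ((m+1:ℕ):ℝ) by push_cast; linarith)
          linarith
  push_cast at hlast hrest ⊢
  linarith

lemma Qval {n i : ℕ} (hi : i < n) :
    ∑ j ∈ Ico (i+1) n, Real.log ((n^2 - j*n : ℕ):ℝ) =
      ((n:ℝ) - 1 - i) * Real.log n + Real.log (Nat.factorial (n-1-i)) := by
  have hnn : n^2 = n*n := sq n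
  have hn0 : (0:ℝ) < (n:ℝ) := by exact_mod_cast (show 0 < n by omega)
  have hc : ∀ j ∈ Ico (i+1) n,
      Real.log ((n^2 - j*n : ℕ):ℝ) = Real.log n + Real.log ((n - j : ℕ):ℝ) := by
    intro j hj
    obtain ⟨hj1, hj2⟩ := Finset.mem_Ico.mp hj
    have hmul : n*(n-j) + n*j = n*n := by
      rw [← Nat.mul_add]; congr 1; omega
    have key : n^2 - j*n = n*(n-j) := by
      have hcomm : j*n = n*j := Nat.mul_comm j n
      omega
    rw [key]
    push_cast
    rw [Real.log_mul (ne_of_gt hn0)]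
    have h1 : 0 < n - j := by omega
    exact ne_of_gt (by exact_mod_cast h1 : (0:ℝ) < ((n-j:ℕ):ℝ))
  rw [Finset.sum_congr rfl hc, Finset.sum_add_distrib, Finset.sum_const, Nat.card_Ico]
  have hcard : ((n - (i+1) : ℕ):ℝ) = (n:ℝ) - 1 - i := by
    rw [Nat.cast_sub (by omega)]; push_cast; ring
  have htail : ∑ j ∈ Ico (i+1) n, Real.log ((n - j : ℕ):ℝ) =
      Real.log (Nat.factorial (n-1-i)) := by
    rw [Finset.sum_Ico_eq_sum_range]
    set d := n - 1 - i with hd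
    have hdn : n - (i+1) = d := by omega
    rw [hdn]
    have hc2 : ∀ k ∈ range d, Real.log ((n - (i+1+k) : ℕ):ℝ) =
        (fun k => Real.log ((k+1 : ℕ):ℝ)) (d - 1 - k) := by
      intro k hk
      have hk' : k < d := Finset.mem_range.mp hk
      have h : n - (i+1+k) = d - 1 - k + 1 := by omega
      simp only []
      rw [h]
    rw [Finset.sum_congr rfl hc2,
      Finset.sum_range_reflect (fun k => Real.log ((k+1 : ℕ):ℝ)) d]
    have hc4 : ∀ k ∈ range d, Real.log ((k+1:ℕ):ℝ) = Real.log ((k:ℝ)+1) := by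
      intro k _; push_cast; ring_nf
    rw [Finset.sum_congr rfl hc4, sum_log_range]
  rw [htail, nsmul_eq_mul, hcard]

lemma Pub {n i : ℕ} (hi : i < n) :
    ∑ j ∈ range (i+1), Real.log ((n^2 - i*n - j : ℕ):ℝ) ≤
      ((i:ℝ)+1) * (Real.log n + Real.log ((n - i : ℕ):ℝ)) := by
  have hiR : (i:ℝ) < (n:ℝ) := by exact_mod_cast hi
  have hNi : ((n - i : ℕ):ℝ) = (n:ℝ) - i := by rw [Nat.cast_sub (le_of_lt hi)]
  have hterm : ∀ j ∈ range (i+1),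
      Real.log ((n^2 - i*n - j : ℕ):ℝ) ≤ Real.log n + Real.log ((n - i : ℕ):ℝ) := by
    intro j hj
    have hj' : j ≤ i := by have := Finset.mem_range.mp hj; omega
    have hm1 : (1:ℝ) ≤ ((n^2 - i*n - j : ℕ):ℝ) := by
      exact_mod_cast m1_pos hi hj'
    have hle : ((n^2 - i*n - j : ℕ):ℝ) ≤ (n:ℝ) * ((n:ℝ) - i) := by
      rw [cast1 hi hj']
      have : (0:ℝ) ≤ (j:ℝ) := by positivity
      nlinarith
    calc Real.log ((n^2 - i*n - j : ℕ):ℝ) ≤ Real.log ((n:ℝ) * ((n:ℝ) - i)) :=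
          Real.log_le_log (by linarith) hle
      _ = Real.log n + Real.log ((n - i : ℕ):ℝ) := by
          rw [Real.log_mul (ne_of_gt (by linarith : (0:ℝ) < (n:ℝ))) (ne_of_gt (by linarith : (0:ℝ) < (n:ℝ) - i)), hNi]
  calc ∑ j ∈ range (i+1), Real.log ((n^2 - i*n - j : ℕ):ℝ)
      ≤ ∑ _j ∈ range (i+1), (Real.log n + Real.log ((n - i : ℕ):ℝ)) :=
        Finset.sum_le_sum hterm
    _ = ((i:ℝ)+1) * (Real.log n + Real.log ((n - i : ℕ):ℝ)) := by
        rw [Finset.sum_const, Finset.card_range]; push_cast; ring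

lemma Plb_small {n i : ℕ} (hi : i + 1 < n) :
    ((i:ℝ)+1) * (Real.log n + Real.log ((n - i : ℕ):ℝ)) - (n:ℝ)/((n:ℝ)-1-i) ≤
      ∑ j ∈ range (i+1), Real.log ((n^2 - i*n - j : ℕ):ℝ) := by
  have hiR : (i:ℝ) + 1 < (n:ℝ) := by exact_mod_cast hi
  have hNi : ((n - i : ℕ):ℝ) = (n:ℝ) - i := by rw [Nat.cast_sub (by omega)]
  have hden : (0:ℝ) < (n:ℝ) * ((n:ℝ)-1-i) := by
    apply mul_pos (by linarith) (by linarith)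
  have hterm : ∀ j ∈ range (i+1),
      (Real.log n + Real.log ((n - i : ℕ):ℝ)) - (i:ℝ)/((n:ℝ)*((n:ℝ)-1-i)) ≤
        Real.log ((n^2 - i*n - j : ℕ):ℝ) := by
    intro j hj
    have hj' : j ≤ i := by have := Finset.mem_range.mp hj; omega
    have hjR : (j:ℝ) ≤ (i:ℝ) := by exact_mod_cast hj'
    have hm : ((n^2 - i*n - j : ℕ):ℝ) = (n:ℝ)^2 - i*n - j := cast1 (by omega) hj'
    have hmlb : (n:ℝ)*((n:ℝ)-1-i) ≤ ((n^2 - i*n - j : ℕ):ℝ) := by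
      rw [hm]; nlinarith
    have hmpos : (0:ℝ) < ((n^2 - i*n - j : ℕ):ℝ) := lt_of_lt_of_le hden hmlb
    have hlogdiff : Real.log ((n:ℝ) * ((n:ℝ)-i)) - Real.log ((n^2 - i*n - j : ℕ):ℝ) ≤
        (i:ℝ)/((n:ℝ)*((n:ℝ)-1-i)) := by
      have haux : (0:ℝ) < (n:ℝ)*((n:ℝ)-i) := by
        apply mul_pos (by linarith) (by linarith)
      rw [← Real.log_div (ne_of_gt haux) (ne_of_gt hmpos)]
      have hlog := Real.log_le_sub_one_of_pos
        (show (0:ℝ) < ((n:ℝ)*((n:ℝ)-i)) / ((n^2 - i*n - j : ℕ):ℝ) from div_pos haux hmpos)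
      have hfrac : ((n:ℝ)*((n:ℝ)-i)) / ((n^2 - i*n - j : ℕ):ℝ) - 1 ≤
          (i:ℝ)/((n:ℝ)*((n:ℝ)-1-i)) := by
        rw [div_sub_one (ne_of_gt hmpos)]
        have hnum : (n:ℝ)*((n:ℝ)-i) - ((n^2 - i*n - j : ℕ):ℝ) = (j:ℝ) := by
          rw [hm]; ring
        rw [hnum]
        exact div_le_div₀ (by positivity) hjR hden hmlb
      linarith
    have hsplit : Real.log ((n:ℝ) * ((n:ℝ)-i)) = Real.log n + Real.log ((n - i : ℕ):ℝ) := by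
      rw [Real.log_mul (ne_of_gt (by linarith : (0:ℝ) < (n:ℝ))) (ne_of_gt (by linarith : (0:ℝ) < (n:ℝ) - i)), hNi]
    linarith
  calc ((i:ℝ)+1) * (Real.log n + Real.log ((n - i : ℕ):ℝ)) - (n:ℝ)/((n:ℝ)-1-i)
      ≤ ((i:ℝ)+1) * ((Real.log n + Real.log ((n - i : ℕ):ℝ)) - (i:ℝ)/((n:ℝ)*((n:ℝ)-1-i))) := by
        have hkey : ((i:ℝ)+1) * ((i:ℝ)/((n:ℝ)*((n:ℝ)-1-i))) ≤ (n:ℝ)/((n:ℝ)-1-i) := by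
          have hrw : ((i:ℝ)+1) * ((i:ℝ)/((n:ℝ)*((n:ℝ)-1-i))) =
              (((i:ℝ)+1)*(i:ℝ))/((n:ℝ)*((n:ℝ)-1-i)) := by ring
          rw [hrw, div_le_div_iff₀ hden (by linarith)]
          have h1 : ((i:ℝ)+1) ≤ (n:ℝ) := by linarith
          have h2 : (i:ℝ) ≤ (n:ℝ) := by linarith
          have h3 : (0:ℝ) ≤ (i:ℝ) := by positivity
          have h4 : (0:ℝ) ≤ (n:ℝ) - 1 - i := by linarith
          have h5 : ((i:ℝ)+1)*(i:ℝ) ≤ (n:ℝ)*(n:ℝ) := by nlinarith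
          nlinarith [mul_le_mul_of_nonneg_right h5 h4]
        nlinarith [hkey]
    _ ≤ ∑ j ∈ range (i+1), Real.log ((n^2 - i*n - j : ℕ):ℝ) := by
        calc ((i:ℝ)+1) * ((Real.log n + Real.log ((n - i : ℕ):ℝ)) - (i:ℝ)/((n:ℝ)*((n:ℝ)-1-i)))
            = ∑ _j ∈ range (i+1), ((Real.log n + Real.log ((n - i : ℕ):ℝ)) - (i:ℝ)/((n:ℝ)*((n:ℝ)-1-i))) := by
              rw [Finset.sum_const, Finset.card_range]; push_cast; ring
          _ ≤ _ := Finset.sum_le_sum hterm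

lemma Plb_last (m : ℕ) (hm : 1 ≤ m) :
    ((m:ℝ)+1) * (Real.log ((m+1:ℕ)) + Real.log (((m+1) - m : ℕ):ℝ)) - ((m:ℝ)+1) ≤
      ∑ j ∈ range (m+1), Real.log (((m+1)^2 - m*(m+1) - j : ℕ):ℝ) := by
  have h1 : ((m+1) - m : ℕ) = 1 := by omega
  have hsum : ∑ j ∈ range (m+1), Real.log (((m+1)^2 - m*(m+1) - j : ℕ):ℝ)
      = Real.log (Nat.factorial (m+1)) := by
    have hc : ∀ j ∈ range (m+1), Real.log (((m+1)^2 - m*(m+1) - j : ℕ):ℝ) =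
        (fun k => Real.log ((k+1 : ℕ):ℝ)) ((m+1) - 1 - j) := by
      intro j hj
      have hj' : j < m+1 := Finset.mem_range.mp hj
      have hsq : (m+1)^2 = m*(m+1) + (m+1) := by ring
      have key : (m+1)^2 - m*(m+1) - j = (m+1) - 1 - j + 1 := by omega
      simp only []
      rw [key]
    rw [Finset.sum_congr rfl hc,
      Finset.sum_range_reflect (fun k => Real.log ((k+1 : ℕ):ℝ)) (m+1)]
    have hc4 : ∀ k ∈ range (m+1), Real.log ((k+1:ℕ):ℝ) = Real.log ((k:ℝ)+1) := by
      intro k _; norm_num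
    rw [Finset.sum_congr rfl hc4, sum_log_range]
  rw [hsum, h1]
  have := logfac_lower (m+1)
  push_cast at this ⊢
  simpa using this

lemma A_bounds (n : ℕ) (hn : 2 ≤ n) :
    |(∑ i ∈ range n, ((∑ j ∈ range (i+1), Real.log ((n^2 - i*n - j : ℕ):ℝ))
        + ∑ j ∈ Ico (i+1) n, Real.log ((n^2 - j*n : ℕ):ℝ)))
      - (2*(n:ℝ)^2*Real.log n - 1.5*(n:ℝ)^2)| ≤ 15*(n:ℝ)*Real.log n := by
  have hN : (2:ℝ) ≤ (n:ℝ) := by exact_mod_cast hn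
  set N := (n:ℝ) with hNdef
  set Ln := Real.log n with hLndef
  have hLn0 : 0 < Ln := Real.log_pos (by linarith)
  have hLn2 : 1 ≤ 2*Ln := by
    have h2 : Real.log 2 ≤ Ln := Real.log_le_log (by norm_num) hN
    have := Real.log_two_gt_d9
    linarith
  have hLnN : Ln ≤ N := by
    have := Real.log_le_sub_one_of_pos (show (0:ℝ) < N by linarith)
    linarith
  -- row main term
  set MR : ℕ → ℝ := fun i => ((i:ℝ)+1) * (Ln + Real.log ((n - i : ℕ):ℝ))
      + (((n:ℝ) - 1 - i) * Ln + Real.log (Nat.factorial (n-1-i))) with hMR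
  set A := ∑ i ∈ range n, ((∑ j ∈ range (i+1), Real.log ((n^2 - i*n - j : ℕ):ℝ))
        + ∑ j ∈ Ico (i+1) n, Real.log ((n^2 - j*n : ℕ):ℝ)) with hA
  -- rewrite Q rows
  have hAeq : A = ∑ i ∈ range n, ((∑ j ∈ range (i+1), Real.log ((n^2 - i*n - j : ℕ):ℝ))
      + (((n:ℝ) - 1 - i) * Ln + Real.log (Nat.factorial (n-1-i)))) := by
    apply Finset.sum_congr rfl
    intro i hi
    rw [Qval (Finset.mem_range.mp hi)]
  -- upper bound
  have hub : A ≤ ∑ i ∈ range n, MR i := by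
    rw [hAeq]
    apply Finset.sum_le_sum
    intro i hi
    have := Pub (n := n) (i := i) (Finset.mem_range.mp hi)
    simp only [hMR]
    linarith
  -- lower bound
  have hlb : (∑ i ∈ range n, MR i) - (N*(Ln+1) + N) ≤ A := by
    obtain ⟨m, rfl⟩ : ∃ m, n = m + 1 := ⟨n - 1, by omega⟩
    have hm : 1 ≤ m := by omega
    rw [hAeq, Finset.sum_range_succ, Finset.sum_range_succ]
    have hLl : Real.log ((m:ℝ)+1) = Ln := by
      rw [hLndef]; norm_num
    have hsmall : ∀ i ∈ range m,
        MR i - N/(N-1-i) ≤ (∑ j ∈ range (i+1), Real.log (((m+1)^2 - i*(m+1) - j : ℕ):ℝ))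
          + ((((m+1:ℕ)):ℝ) - 1 - i) * Ln + Real.log (Nat.factorial ((m+1)-1-i)) := by
      intro i hi
      have hi' : i < m := Finset.mem_range.mp hi
      have hP := Plb_small (n := m+1) (i := i) (by omega)
      have hNm : N = (m:ℝ)+1 := by rw [hNdef]; push_cast; ring
      simp only [hMR]
      rw [hNm]
      push_cast at hP ⊢
      rw [hLl] at hP
      linarith
    have h1 : ∑ i ∈ range m, (MR i - N/(N-1-i)) ≤
        ∑ i ∈ range m, ((∑ j ∈ range (i+1), Real.log (((m+1)^2 - i*(m+1) - j : ℕ):ℝ))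
          + (((((m+1:ℕ)):ℝ) - 1 - i) * Ln + Real.log (Nat.factorial ((m+1)-1-i)))) := by
      apply Finset.sum_le_sum
      intro i hi
      have := hsmall i hi
      linarith
    have h2 : ∑ i ∈ range m, N/(N-1-i) ≤ N*(Ln+1) := by
      have hc : ∀ i ∈ range m, N/(N-1-i) = N * (1/((m:ℝ) - i)) := by
        intro i hi
        have : N - 1 - (i:ℝ) = (m:ℝ) - i := by
          rw [hNdef]; push_cast; ring
        rw [this]; ring
      rw [Finset.sum_congr rfl hc, ← Finset.mul_sum]
      have hh := inv_harm m
      have hlm : Real.log m ≤ Ln := by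
        rw [hLndef]
        apply Real.log_le_log (by exact_mod_cast hm)
        push_cast; linarith
      have hN0 : (0:ℝ) ≤ N := by linarith
      calc N * ∑ i ∈ range m, 1/((m:ℝ) - i) ≤ N * (Real.log m + 1) := by
            apply mul_le_mul_of_nonneg_left _ hN0
            exact hh
        _ ≤ N * (Ln + 1) := by
            apply mul_le_mul_of_nonneg_left _ hN0
            linarith
    have h3 : MR m - N ≤ (∑ j ∈ range (m+1), Real.log (((m+1)^2 - m*(m+1) - j : ℕ):ℝ))
        + ((((m+1:ℕ)):ℝ) - 1 - (m:ℝ)) * Ln + Real.log (Nat.factorial ((m+1)-1-m)) := by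
      have hPl := Plb_last m hm
      have hNm : N = (m:ℝ)+1 := by rw [hNdef]; push_cast; ring
      have e0 : (m+1) - 1 - m = 0 := by omega
      have e1 : ((m+1) - m : ℕ) = 1 := by omega
      rw [e1] at hPl
      simp only [hMR]
      rw [e0, e1, hNm]
      simp only [Nat.factorial_zero, Nat.cast_one, Real.log_one] at hPl ⊢
      push_cast at hPl ⊢
      rw [hLl] at hPl
      linarith
    rw [Finset.sum_sub_distrib] at h1
    push_cast at h1 h3 ⊢
    linarith
  -- main-term identity
  have hmain : ∑ i ∈ range n, MR i =
      N^2*Ln + (2*N+1) * Real.log (Nat.factorial n) - 2 * G n := by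
    have hrow : ∀ i ∈ range n, MR i =
        N*Ln + (((i:ℝ)+1) * Real.log ((n - i : ℕ):ℝ) + Real.log (Nat.factorial (n-1-i))) := by
      intro i _
      simp only [hMR]
      ring
    rw [Finset.sum_congr rfl hrow, Finset.sum_add_distrib, Finset.sum_const,
      Finset.card_range, Finset.sum_add_distrib, sum_weighted n]
    have hrefl : ∑ i ∈ range n, Real.log (Nat.factorial (n-1-i)) =
        ∑ r ∈ range n, Real.log (Nat.factorial r) :=
      Finset.sum_range_reflect (fun r => Real.log (Nat.factorial r)) n
    rw [hrefl, sum_logfac n, nsmul_eq_mul]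
    ring
  -- conclude
  set F := Real.log (Nat.factorial n) with hF
  have hF1 : N*Ln - N ≤ F := logfac_lower n
  have hF2 : F ≤ N*Ln - N + Ln + 1 := logfac_upper n
  have hG1 : N^2/2*Ln - N^2/4 ≤ G n := G_lower n
  have hG2 : G n ≤ N^2/2*Ln - N^2/4 + N*Ln + N := G_upper n
  have hmain' : ∑ i ∈ range n, MR i =
      2*N^2*Ln - 1.5*N^2 + N*Ln - N + (2*N+1)*(F - (N*Ln - N))
        - 2*(G n - (N^2/2*Ln - N^2/4)) := by
    rw [hmain]; ring
  have hd0 : 0 ≤ F - (N*Ln - N) := by linarith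
  have hd1 : F - (N*Ln - N) ≤ Ln + 1 := by linarith
  have hg0 : 0 ≤ G n - (N^2/2*Ln - N^2/4) := by linarith
  have hg1 : G n - (N^2/2*Ln - N^2/4) ≤ N*Ln + N := by linarith
  have hp1 : (2*N+1)*(F - (N*Ln - N)) ≤ (3*N)*(3*Ln) := by
    apply mul_le_mul (by linarith) (by linarith) hd0 (by linarith)
  have hp2 : 0 ≤ (2*N+1)*(F - (N*Ln - N)) := mul_nonneg (by linarith) hd0
  have hNL : N*1 ≤ N*(2*Ln) := mul_le_mul_of_nonneg_left hLn2 (by linarith)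
  have hNLn0 : 0 ≤ N*Ln := mul_nonneg (by linarith) (le_of_lt hLn0)
  rw [abs_le]
  constructor
  · linarith [hlb, hmain', hp2, hg1, hNL, hNLn0]
  · linarith [hub, hmain', hp1, hg0, hNL, hNLn0]

lemma keyest {n m : ℕ} (hn : 2 ≤ n) (h1 : 1 ≤ m) (h2 : m ≤ n^2) :
    |((n:ℝ)^2 / (m:ℝ)) * Real.log (Nat.factorial m)
      - ((n:ℝ)^2 * Real.log ((m:ℕ):ℝ) - (n:ℝ)^2)| ≤
      (4*(n:ℝ)^2*Real.log n) * (1/(m:ℝ)) := by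
  have hN : (2:ℝ) ≤ (n:ℝ) := by exact_mod_cast hn
  have hm0 : (0:ℝ) < (m:ℝ) := by exact_mod_cast h1
  have hLn0 : 0 < Real.log n := Real.log_pos (by linarith)
  have hLn2 : 1 ≤ 2*Real.log n := by
    have h2' : Real.log 2 ≤ Real.log n := Real.log_le_log (by norm_num) hN
    have := Real.log_two_gt_d9
    linarith
  have hid : ((n:ℝ)^2/(m:ℝ)) * ((m:ℝ)*Real.log (m:ℝ) - (m:ℝ)) =
      (n:ℝ)^2*Real.log (m:ℝ) - (n:ℝ)^2 := by
    field_simp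
  have hrw : ((n:ℝ)^2 / (m:ℝ)) * Real.log (Nat.factorial m)
      - ((n:ℝ)^2 * Real.log ((m:ℕ):ℝ) - (n:ℝ)^2) =
      ((n:ℝ)^2/(m:ℝ)) * (Real.log (Nat.factorial m) - ((m:ℝ)*Real.log (m:ℝ) - (m:ℝ))) := by
    rw [mul_sub, hid]
  rw [hrw, abs_mul, abs_of_nonneg (by positivity : (0:ℝ) ≤ (n:ℝ)^2/(m:ℝ))]
  have hD : |Real.log (Nat.factorial m) - ((m:ℝ)*Real.log (m:ℝ) - (m:ℝ))| ≤
      4*Real.log n := by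
    have hl := logfac_lower m
    have hu := logfac_upper m
    have hlogm : Real.log (m:ℝ) ≤ 2*Real.log n := by
      have hcast : (m:ℝ) ≤ (n:ℝ)^2 := by
        have : ((m:ℕ):ℝ) ≤ ((n^2:ℕ):ℝ) := by exact_mod_cast h2
        push_cast at this
        linarith
      calc Real.log (m:ℝ) ≤ Real.log ((n:ℝ)^2) := Real.log_le_log hm0 hcast
        _ = 2*Real.log n := by rw [Real.log_pow]; push_cast; ring
    rw [abs_le]
    constructor
    · linarith
    · linarith
  calc (n:ℝ)^2/(m:ℝ) * |Real.log (Nat.factorial m) - ((m:ℝ)*Real.log (m:ℝ) - (m:ℝ))|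
      ≤ (n:ℝ)^2/(m:ℝ) * (4*Real.log n) :=
        mul_le_mul_of_nonneg_left hD (by positivity)
    _ = (4*(n:ℝ)^2*Real.log n) * (1/(m:ℝ)) := by ring

end SUProofAux


/-- `ln S_U(n) = 2 n⁴ ln n − 2.5 n⁴ + O(n³ ln n)` as `n → ∞`. -/

theorem log_SU_asymptotic :
    ∃ C : ℝ, ∀ n : ℕ, 2 ≤ n →
      |Real.log (SU n) - (2 * (n : ℝ) ^ 4 * Real.log n - 2.5 * (n : ℝ) ^ 4)| ≤
        C * (n : ℝ) ^ 3 * Real.log n := by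
  use 100
  intro n hn
  have hN : (2:ℝ) ≤ (n:ℝ) := by exact_mod_cast hn
  set N := (n:ℝ) with hNdef
  set Ln := Real.log n with hLndef
  have hLn0 : 0 < Ln := Real.log_pos (by linarith)
  have hLnN : Ln ≤ N := by
    have := Real.log_le_sub_one_of_pos (show (0:ℝ) < N by linarith)
    linarith
  set A := ∑ i ∈ range n, ((∑ j ∈ range (i+1), Real.log ((n^2 - i*n - j : ℕ):ℝ))
        + ∑ j ∈ Ico (i+1) n, Real.log ((n^2 - j*n : ℕ):ℝ)) with hA
  set T := ∑ i ∈ range n,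
      ((∑ j ∈ range (i+1), (N^2 * Real.log ((n^2-i*n-j:ℕ):ℝ) - N^2))
      + ∑ j ∈ Ico (i+1) n, (N^2 * Real.log ((n^2-j*n:ℕ):ℝ) - N^2)) with hT
  -- T = N^2 * A - N^4
  have hTid : T = N^2 * A - N^4 := by
    rw [hT, hA]
    have hrow : ∀ i ∈ range n,
        ((∑ j ∈ range (i+1), (N^2 * Real.log ((n^2-i*n-j:ℕ):ℝ) - N^2))
          + ∑ j ∈ Ico (i+1) n, (N^2 * Real.log ((n^2-j*n:ℕ):ℝ) - N^2)) =
        N^2 * ((∑ j ∈ range (i+1), Real.log ((n^2 - i*n - j : ℕ):ℝ))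
          + ∑ j ∈ Ico (i+1) n, Real.log ((n^2 - j*n : ℕ):ℝ)) - N^3 := by
      intro i hi
      have hi' : i < n := Finset.mem_range.mp hi
      rw [Finset.sum_sub_distrib, Finset.sum_sub_distrib, ← Finset.mul_sum, ← Finset.mul_sum,
        Finset.sum_const, Finset.sum_const, Finset.card_range, Nat.card_Ico,
        nsmul_eq_mul, nsmul_eq_mul]
      have hc : ((n - (i+1) : ℕ):ℝ) = N - ((i:ℝ)+1) := by
        rw [Nat.cast_sub (by omega)]; push_cast [hNdef]; ring
      rw [hc]
      push_cast
      ring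
    rw [Finset.sum_congr rfl hrow, Finset.sum_sub_distrib, ← Finset.mul_sum,
      Finset.sum_const, Finset.card_range, nsmul_eq_mul]
    have : (n:ℝ) * N^3 = N^4 := by rw [hNdef]; ring
    rw [this]
  -- E1 : per-row bounds
  have hE1 : |Real.log (SU n) - T| ≤ 16*N^3*Ln := by
    rw [log_SU n, hT, ← Finset.sum_sub_distrib]
    have hrowbd : ∀ i ∈ range n,
        |((∑ j ∈ range (i+1), ((n:ℝ)^2 / ((n^2 - i*n - j : ℕ):ℝ)) *
            Real.log (Nat.factorial (n^2 - i*n - j)))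
          + ∑ j ∈ Ico (i+1) n, ((n:ℝ)^2 / ((n^2 - j*n : ℕ):ℝ)) *
            Real.log (Nat.factorial (n^2 - j*n)))
          - ((∑ j ∈ range (i+1), (N^2 * Real.log ((n^2-i*n-j:ℕ):ℝ) - N^2))
          + ∑ j ∈ Ico (i+1) n, (N^2 * Real.log ((n^2-j*n:ℕ):ℝ) - N^2))| ≤
        (4*N^2*Ln) * (∑ j ∈ range (i+1), 1/(((n^2 - i*n - j : ℕ)):ℝ)) + 4*N^2*Ln := by
      intro i hi
      have hi' : i < n := Finset.mem_range.mp hi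
      have hb1 : |(∑ j ∈ range (i+1), ((n:ℝ)^2 / ((n^2 - i*n - j : ℕ):ℝ)) *
            Real.log (Nat.factorial (n^2 - i*n - j)))
          - ∑ j ∈ range (i+1), (N^2 * Real.log ((n^2-i*n-j:ℕ):ℝ) - N^2)| ≤
          (4*N^2*Ln) * (∑ j ∈ range (i+1), 1/(((n^2 - i*n - j : ℕ)):ℝ)) := by
        rw [← Finset.sum_sub_distrib, Finset.mul_sum]
        calc _ ≤ ∑ j ∈ range (i+1), |((n:ℝ)^2 / ((n^2 - i*n - j : ℕ):ℝ)) *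
              Real.log (Nat.factorial (n^2 - i*n - j))
              - (N^2 * Real.log ((n^2-i*n-j:ℕ):ℝ) - N^2)| :=
            Finset.abs_sum_le_sum_abs _ _
          _ ≤ _ := by
            apply Finset.sum_le_sum
            intro j hj
            have hj' : j ≤ i := by have := Finset.mem_range.mp hj; omega
            exact keyest hn (m1_pos hi' hj') (by omega)
      have hb2 : |(∑ j ∈ Ico (i+1) n, ((n:ℝ)^2 / ((n^2 - j*n : ℕ):ℝ)) *
            Real.log (Nat.factorial (n^2 - j*n)))
          - ∑ j ∈ Ico (i+1) n, (N^2 * Real.log ((n^2-j*n:ℕ):ℝ) - N^2)| ≤ 4*N^2*Ln := by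
        rw [← Finset.sum_sub_distrib]
        calc _ ≤ ∑ j ∈ Ico (i+1) n, |((n:ℝ)^2 / ((n^2 - j*n : ℕ):ℝ)) *
              Real.log (Nat.factorial (n^2 - j*n))
              - (N^2 * Real.log ((n^2-j*n:ℕ):ℝ) - N^2)| :=
            Finset.abs_sum_le_sum_abs _ _
          _ ≤ ∑ _j ∈ Ico (i+1) n, (4*N^2*Ln) * (1/N) := by
            apply Finset.sum_le_sum
            intro j hj
            have hj' : j < n := (Finset.mem_Ico.mp hj).2
            have hmge : n ≤ n^2 - j*n := m2_ge hj'
            calc |((n:ℝ)^2 / ((n^2 - j*n : ℕ):ℝ)) *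
                  Real.log (Nat.factorial (n^2 - j*n))
                  - (N^2 * Real.log ((n^2-j*n:ℕ):ℝ) - N^2)| ≤
                (4*N^2*Ln) * (1/(((n^2 - j*n:ℕ)):ℝ)) :=
                  keyest hn (by omega) (by omega)
              _ ≤ (4*N^2*Ln) * (1/N) := by
                  apply mul_le_mul_of_nonneg_left _ (by positivity)
                  apply one_div_le_one_div_of_le (by linarith)
                  rw [hNdef]
                  exact_mod_cast hmge
          _ ≤ 4*N^2*Ln := by
            rw [Finset.sum_const, Nat.card_Ico, nsmul_eq_mul]
            have hcard : ((n - (i+1) : ℕ):ℝ) ≤ N := by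
              rw [hNdef]; exact_mod_cast Nat.sub_le n (i+1)
            have : ((n - (i+1) : ℕ):ℝ) * ((4*N^2*Ln) * (1/N)) ≤ N * ((4*N^2*Ln) * (1/N)) := by
              apply mul_le_mul_of_nonneg_right hcard (by positivity)
            calc ((n - (i+1) : ℕ):ℝ) * ((4*N^2*Ln) * (1/N)) ≤ N * ((4*N^2*Ln) * (1/N)) := this
              _ = 4*N^2*Ln := by
                  field_simp
      calc _ ≤ |(∑ j ∈ range (i+1), ((n:ℝ)^2 / ((n^2 - i*n - j : ℕ):ℝ)) *
            Real.log (Nat.factorial (n^2 - i*n - j)))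
          - ∑ j ∈ range (i+1), (N^2 * Real.log ((n^2-i*n-j:ℕ):ℝ) - N^2)|
          + |(∑ j ∈ Ico (i+1) n, ((n:ℝ)^2 / ((n^2 - j*n : ℕ):ℝ)) *
            Real.log (Nat.factorial (n^2 - j*n)))
          - ∑ j ∈ Ico (i+1) n, (N^2 * Real.log ((n^2-j*n:ℕ):ℝ) - N^2)| := by
            apply le_trans (le_of_eq (by congr 1; ring)) (abs_add_le _ _)
        _ ≤ _ := by linarith [hb1, hb2]
    calc |∑ i ∈ range n, _| ≤ _ := Finset.abs_sum_le_sum_abs _ _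
      _ ≤ ∑ i ∈ range n, ((4*N^2*Ln) * (∑ j ∈ range (i+1), 1/(((n^2 - i*n - j : ℕ)):ℝ))
            + 4*N^2*Ln) := Finset.sum_le_sum hrowbd
      _ = (4*N^2*Ln) * (∑ i ∈ range n, ∑ j ∈ range (i+1), 1/(((n^2 - i*n - j : ℕ)):ℝ))
            + (n:ℝ) * (4*N^2*Ln) := by
          rw [Finset.sum_add_distrib, ← Finset.mul_sum, Finset.sum_const, Finset.card_range,
            nsmul_eq_mul]
      _ ≤ (4*N^2*Ln) * (2*Ln + 2) + N * (4*N^2*Ln) := by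
          have hS := S_bound n hn
          have h1 : (4*N^2*Ln) * (∑ i ∈ range n, ∑ j ∈ range (i+1),
              1/(((n^2 - i*n - j : ℕ)):ℝ)) ≤ (4*N^2*Ln) * (2*Ln + 2) :=
            mul_le_mul_of_nonneg_left hS (by positivity)
          rw [hNdef]
          linarith [h1]
      _ ≤ 16*N^3*Ln := by
          have h2 : 2*Ln + 2 ≤ 3*N := by linarith
          have h3 : (4*N^2*Ln) * (2*Ln+2) ≤ (4*N^2*Ln) * (3*N) :=
            mul_le_mul_of_nonneg_left h2 (by positivity)
          nlinarith [h3]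
  -- final combination
  have hAb : |A - (2*N^2*Ln - 1.5*N^2)| ≤ 15*N*Ln := A_bounds n hn
  have hfin : Real.log (SU n) - (2 * N ^ 4 * Ln - 2.5 * N ^ 4) =
      (Real.log (SU n) - T) + N^2 * (A - (2*N^2*Ln - 1.5*N^2)) := by
    rw [hTid]; ring
  rw [hfin]
  calc |(Real.log (SU n) - T) + N^2 * (A - (2*N^2*Ln - 1.5*N^2))|
      ≤ |Real.log (SU n) - T| + |N^2 * (A - (2*N^2*Ln - 1.5*N^2))| := abs_add_le _ _
    _ = |Real.log (SU n) - T| + N^2 * |A - (2*N^2*Ln - 1.5*N^2)| := by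
        rw [abs_mul, abs_of_nonneg (by positivity : (0:ℝ) ≤ N^2)]
    _ ≤ 16*N^3*Ln + N^2 * (15*N*Ln) := by
        have := mul_le_mul_of_nonneg_left hAb (by positivity : (0:ℝ) ≤ N^2)
        linarith
    _ ≤ 100 * N ^ 3 * Ln := by
        have hpos : (0:ℝ) ≤ N^3*Ln := by positivity
        nlinarith [hpos]
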